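/- Let S and A be nonempty finite sets, let γ ∈ [0,1), let π : S → PMF(A) be a policy, and let ρ⁰ ∈ PMF(S). Let (M_t)_{t ∈ ℕ} be a sequence of nonempty sets of models (pairs (P, r) of a transition kernel P : S → A → PMF(S) and a reward r : S × A → [0,1]) such that for every t ∈ ℕ the sets M_t and M_{t+1} are mutually within (L_P, L_r): for every m = (P₁, r₁) ∈ M_t there exists (P₂, r₂) ∈ M_{t+1} with Σ_{s'} |P₁(s,a)(s') − P₂(s,a)(s')| ≤ L_P and |r₁(s,a) − r₂(s,a)| ≤ L_r for all (s,a), and symmetrically. Define the robust objective J^R(π, t) = inf_{m ∈ M_t} J(π, m), where J(π, m) is the expected discounted return of π under model m from ρ⁰. Then for all t₀ ∈ ℕ and t ∈ ℕ, |J^R(π, t₀) − J^R(π, t₀ + t)| ≤ L' · t, where L' = γ·L_P/(1−γ)² + L_r/(1−γ). -/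

import Mathlib

noncomputable section

/-- Policy-mixed one-step state-to-state kernel: `K^π(s'|s) = ∑_a π(s)(a) · K(s,a)(s')`. -/
def kerPi {S A : Type*} [Fintype A] (π : S → PMF A) (K : S → A → PMF S)
    (s s' : S) : ℝ :=
  ∑ a : A, ((π s) a).toReal * ((K s a) s').toReal

/-- State distribution at time step `k` under policy `π`, kernel `K` and initial
distribution `ρ`: `μ₀ = ρ`, `μ_{k+1}(s') = ∑_s μ_k(s) · ∑_a π(s)(a) · K(s,a)(s')`. -/
def stateDist {S A : Type*} [Fintype S] [Fintype A] (π : S → PMF A)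
    (K : S → A → PMF S) (ρ : PMF S) : ℕ → S → ℝ
  | 0 => fun s => (ρ s).toReal
  | (k + 1) => fun s' => ∑ s : S, stateDist π K ρ k s * kerPi π K s s'

/-- Discounted state occupancy measure `d^π(s) = (1-γ) ∑_{k≥0} γ^k μ_k(s)`. -/
def occ {S A : Type*} [Fintype S] [Fintype A] (γ : ℝ) (π : S → PMF A)
    (K : S → A → PMF S) (ρ : PMF S) (s : S) : ℝ :=
  (1 - γ) * ∑' k : ℕ, γ ^ k * stateDist π K ρ k s

/-- Expected discounted return
`J(π, K, r) = ∑_{k≥0} γ^k ∑_s μ_k(s) ∑_a π(s)(a) r(s,a)`. -/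
def ret {S A : Type*} [Fintype S] [Fintype A] (γ : ℝ) (π : S → PMF A)
    (K : S → A → PMF S) (ρ : PMF S) (r : S × A → ℝ) : ℝ :=
  ∑' k : ℕ, γ ^ k * ∑ s : S, stateDist π K ρ k s * ∑ a : A, ((π s) a).toReal * r (s, a)

/-- A model of a finite MDP: a transition kernel together with a reward function. -/
abbrev Model (S A : Type*) [Fintype S] : Type _ := (S → A → PMF S) × (S × A → ℝ)

section AuxLemmas
set_option linter.unusedSectionVars false
set_option linter.unusedVariables false

lemma pmf_sum_toReal {α : Type*} [Fintype α] (p : PMF α) : ∑ a, (p a).toReal = 1 := by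
  rw [← ENNReal.toReal_sum (fun a _ => p.apply_ne_top a), ← tsum_fintype (L := .unconditional _), p.tsum_coe,
    ENNReal.toReal_one]

variable {S A : Type*} [Fintype S] [Fintype A] (π : S → PMF A) (K K₁ K₂ : S → A → PMF S)
  (ρ : PMF S)

lemma kerPi_nonneg (s s' : S) : 0 ≤ kerPi π K s s' :=
  Finset.sum_nonneg fun _ _ => mul_nonneg ENNReal.toReal_nonneg ENNReal.toReal_nonneg

lemma kerPi_sum (s : S) : ∑ s', kerPi π K s s' = 1 := by
  unfold kerPi
  rw [Finset.sum_comm]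
  simp_rw [← Finset.mul_sum, pmf_sum_toReal, mul_one]
  exact pmf_sum_toReal _

lemma stateDist_nonneg (k : ℕ) (s : S) : 0 ≤ stateDist π K ρ k s := by
  induction k generalizing s with
  | zero => exact ENNReal.toReal_nonneg
  | succ k ih => exact Finset.sum_nonneg fun s₀ _ => mul_nonneg (ih s₀) (kerPi_nonneg π K s₀ s)

lemma stateDist_sum (k : ℕ) : ∑ s, stateDist π K ρ k s = 1 := by
  induction k with
  | zero => exact pmf_sum_toReal ρ
  | succ k ih =>
      show ∑ s' : S, ∑ s : S, stateDist π K ρ k s * kerPi π K s s' = 1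
      rw [Finset.sum_comm]
      simp_rw [← Finset.mul_sum, kerPi_sum, mul_one]
      exact ih

lemma kerPi_diff {L_P : ℝ}
    (h : ∀ s a, ∑ s' : S, |((K₁ s a) s').toReal - ((K₂ s a) s').toReal| ≤ L_P) (s : S) :
    ∑ s' : S, |kerPi π K₁ s s' - kerPi π K₂ s s'| ≤ L_P := by
  calc ∑ s' : S, |kerPi π K₁ s s' - kerPi π K₂ s s'|
      ≤ ∑ s' : S, ∑ a : A, ((π s) a).toReal * |((K₁ s a) s').toReal - ((K₂ s a) s').toReal| := by
        refine Finset.sum_le_sum fun s' _ => ?_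
        unfold kerPi
        rw [← Finset.sum_sub_distrib]
        refine (Finset.abs_sum_le_sum_abs _ _).trans ?_
        refine Finset.sum_le_sum fun a _ => ?_
        rw [← mul_sub, abs_mul, abs_of_nonneg ENNReal.toReal_nonneg]
    _ = ∑ a : A, ((π s) a).toReal * ∑ s' : S, |((K₁ s a) s').toReal - ((K₂ s a) s').toReal| := by
        rw [Finset.sum_comm]; simp_rw [Finset.mul_sum]
    _ ≤ ∑ a : A, ((π s) a).toReal * L_P :=
        Finset.sum_le_sum fun a _ => mul_le_mul_of_nonneg_left (h s a) ENNReal.toReal_nonneg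
    _ = L_P := by rw [← Finset.sum_mul, pmf_sum_toReal, one_mul]

lemma stateDist_diff {L_P : ℝ} (hLP : 0 ≤ L_P)
    (h : ∀ s a, ∑ s' : S, |((K₁ s a) s').toReal - ((K₂ s a) s').toReal| ≤ L_P) (k : ℕ) :
    ∑ s, |stateDist π K₁ ρ k s - stateDist π K₂ ρ k s| ≤ k * L_P := by
  induction k with
  | zero => simp [stateDist]
  | succ k ih =>
    calc ∑ s' : S, |stateDist π K₁ ρ (k+1) s' - stateDist π K₂ ρ (k+1) s'|
        ≤ ∑ s' : S, (∑ s : S, |stateDist π K₁ ρ k s - stateDist π K₂ ρ k s| * kerPi π K₁ s s'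
            + ∑ s : S, stateDist π K₂ ρ k s * |kerPi π K₁ s s' - kerPi π K₂ s s'|) := by
          refine Finset.sum_le_sum fun s' _ => ?_
          show |∑ s : S, stateDist π K₁ ρ k s * kerPi π K₁ s s'
              - ∑ s : S, stateDist π K₂ ρ k s * kerPi π K₂ s s'| ≤ _
          have heq : ∑ s : S, stateDist π K₁ ρ k s * kerPi π K₁ s s'
              - ∑ s : S, stateDist π K₂ ρ k s * kerPi π K₂ s s'
              = ∑ s : S, ((stateDist π K₁ ρ k s - stateDist π K₂ ρ k s) * kerPi π K₁ s s'
                + stateDist π K₂ ρ k s * (kerPi π K₁ s s' - kerPi π K₂ s s')) := by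
            rw [← Finset.sum_sub_distrib]
            exact Finset.sum_congr rfl fun s _ => by ring
          rw [heq, Finset.sum_add_distrib]
          refine (abs_add_le _ _).trans (add_le_add ?_ ?_)
          · refine (Finset.abs_sum_le_sum_abs _ _).trans (Finset.sum_le_sum fun s _ => ?_)
            rw [abs_mul, abs_of_nonneg (kerPi_nonneg π K₁ s s')]
          · refine (Finset.abs_sum_le_sum_abs _ _).trans (Finset.sum_le_sum fun s _ => ?_)
            rw [abs_mul, abs_of_nonneg (stateDist_nonneg π K₂ ρ k s)]
      _ = (∑ s : S, |stateDist π K₁ ρ k s - stateDist π K₂ ρ k s|)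
            + ∑ s : S, stateDist π K₂ ρ k s * ∑ s' : S, |kerPi π K₁ s s' - kerPi π K₂ s s'| := by
          rw [Finset.sum_add_distrib, Finset.sum_comm]
          congr 1
          · simp_rw [← Finset.mul_sum, kerPi_sum, mul_one]
          · rw [Finset.sum_comm]; simp_rw [Finset.mul_sum]
      _ ≤ k * L_P + ∑ s : S, stateDist π K₂ ρ k s * L_P := by
          refine add_le_add ih (Finset.sum_le_sum fun s _ => ?_)
          exact mul_le_mul_of_nonneg_left (kerPi_diff π K₁ K₂ h s) (stateDist_nonneg π K₂ ρ k s)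
      _ = ((k:ℝ)+1) * L_P := by
          rw [← Finset.sum_mul, stateDist_sum, one_mul]; ring
      _ = ((k+1 : ℕ) : ℝ) * L_P := by push_cast; ring

lemma rbar_mem (r : S × A → ℝ) (hr : ∀ x, r x ∈ Set.Icc (0:ℝ) 1) (s : S) :
    (∑ a : A, ((π s) a).toReal * r (s, a)) ∈ Set.Icc (0:ℝ) 1 := by
  constructor
  · exact Finset.sum_nonneg fun a _ => mul_nonneg ENNReal.toReal_nonneg (hr (s,a)).1
  · calc ∑ a : A, ((π s) a).toReal * r (s, a) ≤ ∑ a : A, ((π s) a).toReal * 1 :=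
        Finset.sum_le_sum fun a _ =>
          mul_le_mul_of_nonneg_left (hr (s,a)).2 ENNReal.toReal_nonneg
      _ = 1 := by simp [pmf_sum_toReal]

lemma rbar_diff {L_r : ℝ} (r₁ r₂ : S × A → ℝ)
    (hr : ∀ s a, |r₁ (s, a) - r₂ (s, a)| ≤ L_r) (s : S) :
    |∑ a : A, ((π s) a).toReal * r₁ (s, a) - ∑ a : A, ((π s) a).toReal * r₂ (s, a)| ≤ L_r := by
  rw [← Finset.sum_sub_distrib]
  refine (Finset.abs_sum_le_sum_abs _ _).trans ?_
  calc ∑ a : A, |((π s) a).toReal * r₁ (s,a) - ((π s) a).toReal * r₂ (s,a)|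
      = ∑ a : A, ((π s) a).toReal * |r₁ (s,a) - r₂ (s,a)| := by
        refine Finset.sum_congr rfl fun a _ => ?_
        rw [← mul_sub, abs_mul, abs_of_nonneg ENNReal.toReal_nonneg]
    _ ≤ ∑ a : A, ((π s) a).toReal * L_r :=
        Finset.sum_le_sum fun a _ => mul_le_mul_of_nonneg_left (hr s a) ENNReal.toReal_nonneg
    _ = L_r := by rw [← Finset.sum_mul, pmf_sum_toReal, one_mul]

lemma step_bound {L_P L_r : ℝ} (hLP : 0 ≤ L_P)
    (r₁ r₂ : S × A → ℝ) (hr₁ : ∀ x, r₁ x ∈ Set.Icc (0:ℝ) 1)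
    (hK : ∀ s a, ∑ s' : S, |((K₁ s a) s').toReal - ((K₂ s a) s').toReal| ≤ L_P)
    (hr : ∀ s a, |r₁ (s, a) - r₂ (s, a)| ≤ L_r) (k : ℕ) :
    |∑ s : S, stateDist π K₁ ρ k s * ∑ a : A, ((π s) a).toReal * r₁ (s, a)
      - ∑ s : S, stateDist π K₂ ρ k s * ∑ a : A, ((π s) a).toReal * r₂ (s, a)|
      ≤ k * L_P + L_r := by
  set f₁ := fun s : S => ∑ a : A, ((π s) a).toReal * r₁ (s, a) with hf₁
  set f₂ := fun s : S => ∑ a : A, ((π s) a).toReal * r₂ (s, a) with hf₂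
  have heq : ∑ s : S, stateDist π K₁ ρ k s * f₁ s - ∑ s : S, stateDist π K₂ ρ k s * f₂ s
      = ∑ s : S, ((stateDist π K₁ ρ k s - stateDist π K₂ ρ k s) * f₁ s
        + stateDist π K₂ ρ k s * (f₁ s - f₂ s)) := by
    rw [← Finset.sum_sub_distrib]
    exact Finset.sum_congr rfl fun s _ => by ring
  rw [heq, Finset.sum_add_distrib]
  refine (abs_add_le _ _).trans (add_le_add ?_ ?_)
  · refine (Finset.abs_sum_le_sum_abs _ _).trans ?_
    calc ∑ s : S, |(stateDist π K₁ ρ k s - stateDist π K₂ ρ k s) * f₁ s|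
        ≤ ∑ s : S, |stateDist π K₁ ρ k s - stateDist π K₂ ρ k s| := by
          refine Finset.sum_le_sum fun s _ => ?_
          rw [abs_mul]
          have h1 : |f₁ s| ≤ 1 := by
            rw [abs_of_nonneg (rbar_mem π r₁ hr₁ s).1]; exact (rbar_mem π r₁ hr₁ s).2
          nlinarith [abs_nonneg (stateDist π K₁ ρ k s - stateDist π K₂ ρ k s)]
      _ ≤ k * L_P := stateDist_diff π K₁ K₂ ρ hLP hK k
  · refine (Finset.abs_sum_le_sum_abs _ _).trans ?_
    calc ∑ s : S, |stateDist π K₂ ρ k s * (f₁ s - f₂ s)|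
        ≤ ∑ s : S, stateDist π K₂ ρ k s * L_r := by
          refine Finset.sum_le_sum fun s _ => ?_
          rw [abs_mul, abs_of_nonneg (stateDist_nonneg π K₂ ρ k s)]
          exact mul_le_mul_of_nonneg_left (rbar_diff π r₁ r₂ hr s) (stateDist_nonneg π K₂ ρ k s)
      _ = L_r := by rw [← Finset.sum_mul, stateDist_sum, one_mul]

lemma ret_summable {γ : ℝ} (hγ0 : 0 ≤ γ) (hγ1 : γ < 1) (r : S × A → ℝ)
    (hr : ∀ x, r x ∈ Set.Icc (0:ℝ) 1) :
    Summable (fun k : ℕ => γ ^ k * ∑ s : S, stateDist π K ρ k s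
      * ∑ a : A, ((π s) a).toReal * r (s, a)) := by
  refine Summable.of_nonneg_of_le (fun k => ?_) (fun k => ?_)
    (summable_geometric_of_lt_one hγ0 hγ1)
  · exact mul_nonneg (pow_nonneg hγ0 k) (Finset.sum_nonneg fun s _ =>
      mul_nonneg (stateDist_nonneg π K ρ k s) (rbar_mem π r hr s).1)
  · have : ∑ s : S, stateDist π K ρ k s * ∑ a : A, ((π s) a).toReal * r (s, a) ≤ 1 := by
      calc ∑ s : S, stateDist π K ρ k s * ∑ a : A, ((π s) a).toReal * r (s, a)
          ≤ ∑ s : S, stateDist π K ρ k s * 1 := Finset.sum_le_sum fun s _ =>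
            mul_le_mul_of_nonneg_left (rbar_mem π r hr s).2 (stateDist_nonneg π K ρ k s)
        _ = 1 := by rw [← Finset.sum_mul, stateDist_sum, one_mul]
    calc γ ^ k * _ ≤ γ ^ k * 1 := mul_le_mul_of_nonneg_left this (pow_nonneg hγ0 k)
      _ = γ ^ k := mul_one _

lemma ret_nonneg {γ : ℝ} (hγ0 : 0 ≤ γ) (r : S × A → ℝ)
    (hr : ∀ x, r x ∈ Set.Icc (0:ℝ) 1) : 0 ≤ ret γ π K ρ r :=
  tsum_nonneg fun k => mul_nonneg (pow_nonneg hγ0 k) (Finset.sum_nonneg fun s _ =>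
    mul_nonneg (stateDist_nonneg π K ρ k s) (rbar_mem π r hr s).1)

lemma ret_diff {γ L_P L_r : ℝ} (hγ0 : 0 ≤ γ) (hγ1 : γ < 1) (hLP : 0 ≤ L_P) (hLr : 0 ≤ L_r)
    (r₁ r₂ : S × A → ℝ) (hr₁ : ∀ x, r₁ x ∈ Set.Icc (0:ℝ) 1) (hr₂ : ∀ x, r₂ x ∈ Set.Icc (0:ℝ) 1)
    (hK : ∀ s a, ∑ s' : S, |((K₁ s a) s').toReal - ((K₂ s a) s').toReal| ≤ L_P)
    (hr : ∀ s a, |r₁ (s, a) - r₂ (s, a)| ≤ L_r) :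
    |ret γ π K₁ ρ r₁ - ret γ π K₂ ρ r₂| ≤ γ * L_P / (1 - γ) ^ 2 + L_r / (1 - γ) := by
  set c₁ := fun k : ℕ => γ ^ k * ∑ s : S, stateDist π K₁ ρ k s
    * ∑ a : A, ((π s) a).toReal * r₁ (s, a) with hc₁
  set c₂ := fun k : ℕ => γ ^ k * ∑ s : S, stateDist π K₂ ρ k s
    * ∑ a : A, ((π s) a).toReal * r₂ (s, a) with hc₂
  have hs₁ : Summable c₁ := ret_summable π K₁ ρ hγ0 hγ1 r₁ hr₁
  have hs₂ : Summable c₂ := ret_summable π K₂ ρ hγ0 hγ1 r₂ hr₂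
  have hb : ∀ k : ℕ, |c₁ k - c₂ k| ≤ L_P * ((k : ℝ) * γ ^ k) + L_r * γ ^ k := by
    intro k
    have h0 := step_bound π K₁ K₂ ρ hLP r₁ r₂ hr₁ hK hr k
    have h1 : |c₁ k - c₂ k| = γ ^ k * |∑ s : S, stateDist π K₁ ρ k s * ∑ a : A, ((π s) a).toReal * r₁ (s, a) - ∑ s : S, stateDist π K₂ ρ k s * ∑ a : A, ((π s) a).toReal * r₂ (s, a)| := by
      simp only [hc₁, hc₂]
      rw [← mul_sub, abs_mul, abs_of_nonneg (pow_nonneg hγ0 k)]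
    rw [h1]
    refine le_trans (mul_le_mul_of_nonneg_left h0 (pow_nonneg hγ0 k)) (le_of_eq (by ring))
  have hsum_ng : Summable (fun k : ℕ => (k : ℝ) * γ ^ k) := by
    have := summable_pow_mul_geometric_of_norm_lt_one 1 (by rwa [Real.norm_eq_abs, abs_of_nonneg hγ0] : ‖γ‖ < 1)
    simpa using this
  have hsb : Summable (fun k : ℕ => L_P * ((k : ℝ) * γ ^ k) + L_r * γ ^ k) :=
    ((hsum_ng.mul_left L_P).add ((summable_geometric_of_lt_one hγ0 hγ1).mul_left L_r))
  have habs : Summable (fun k : ℕ => |c₁ k - c₂ k|) :=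
    Summable.of_nonneg_of_le (fun k => abs_nonneg _) hb hsb
  have key : |ret γ π K₁ ρ r₁ - ret γ π K₂ ρ r₂| ≤ ∑' k : ℕ, (L_P * ((k : ℝ) * γ ^ k) + L_r * γ ^ k) := by
    have h1 : ret γ π K₁ ρ r₁ - ret γ π K₂ ρ r₂ = ∑' k : ℕ, (c₁ k - c₂ k) :=
      (Summable.tsum_sub hs₁ hs₂).symm
    rw [h1]
    have habs' : Summable (fun k : ℕ => ‖c₁ k - c₂ k‖) := by
      simp_rw [Real.norm_eq_abs]; exact habs
    have h2 : |∑' k : ℕ, (c₁ k - c₂ k)| ≤ ∑' k : ℕ, |c₁ k - c₂ k| := by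
      have := norm_tsum_le_tsum_norm habs'
      simp_rw [Real.norm_eq_abs] at this
      exact this
    exact h2.trans (Summable.tsum_le_tsum hb habs hsb)
  refine key.trans_eq ?_
  rw [Summable.tsum_add (hsum_ng.mul_left L_P) ((summable_geometric_of_lt_one hγ0 hγ1).mul_left L_r),
    tsum_mul_left, tsum_mul_left,
    tsum_coe_mul_geometric_of_norm_lt_one (by rwa [Real.norm_eq_abs, abs_of_nonneg hγ0]),
    tsum_geometric_of_lt_one hγ0 hγ1]
  field_simp

lemma sInf_image_le_add {α : Type*} {f : α → ℝ} {s t : Set α} (hs : s.Nonempty)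
    (hbdd : BddBelow (f '' t)) {L : ℝ}
    (h : ∀ x ∈ s, ∃ y ∈ t, f y ≤ f x + L) : sInf (f '' t) ≤ sInf (f '' s) + L := by
  have hlb : ∀ z ∈ f '' s, sInf (f '' t) - L ≤ z := by
    rintro z ⟨x, hx, rfl⟩
    obtain ⟨y, hy, hle⟩ := h x hx
    have := csInf_le hbdd ⟨y, hy, rfl⟩
    linarith
  have := le_csInf (hs.image f) hlb
  linarith


end AuxLemmas

/-- **Theorem 2 of the paper.** For a sequence of nonempty uncertainty sets
of models (with `[0,1]`-valued rewards) whose consecutive elements are mutually within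
`(L_P, L_r)`, the robust objective `J^R(π, t) = inf_{m ∈ M_t} J(π, m)` is Lipschitz in time:
`|J^R(π, t₀) - J^R(π, t₀+t)| ≤ L' t` with `L' = γ L_P/(1-γ)² + L_r/(1-γ)`. -/
theorem robust_obj_lipschitz_in_time {S A : Type*} [Fintype S] [Fintype A]
    [Nonempty S] [Nonempty A]
    (γ : ℝ) (hγ0 : 0 ≤ γ) (hγ1 : γ < 1)
    (π : S → PMF A) (ρ : PMF S)
    (M : ℕ → Set (Model S A)) (hM : ∀ t : ℕ, (M t).Nonempty)
    (hrew : ∀ t : ℕ, ∀ m ∈ M t, ∀ x, m.2 x ∈ Set.Icc (0 : ℝ) 1)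
    (L_P L_r : ℝ) (hLP : 0 ≤ L_P) (hLr : 0 ≤ L_r)
    (hfwd : ∀ t : ℕ, ∀ m₁ ∈ M t, ∃ m₂ ∈ M (t + 1),
      (∀ s : S, ∀ a : A, ∑ s' : S, |((m₁.1 s a) s').toReal - ((m₂.1 s a) s').toReal| ≤ L_P) ∧
      ∀ s : S, ∀ a : A, |m₁.2 (s, a) - m₂.2 (s, a)| ≤ L_r)
    (hbwd : ∀ t : ℕ, ∀ m₂ ∈ M (t + 1), ∃ m₁ ∈ M t,
      (∀ s : S, ∀ a : A, ∑ s' : S, |((m₁.1 s a) s').toReal - ((m₂.1 s a) s').toReal| ≤ L_P) ∧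
      ∀ s : S, ∀ a : A, |m₁.2 (s, a) - m₂.2 (s, a)| ≤ L_r) :
    ∀ t₀ t : ℕ,
      |sInf ((fun m : Model S A => ret γ π m.1 ρ m.2) '' M t₀) -
          sInf ((fun m : Model S A => ret γ π m.1 ρ m.2) '' M (t₀ + t))| ≤
        (γ * L_P / (1 - γ) ^ 2 + L_r / (1 - γ)) * t := by
  set f : Model S A → ℝ := fun m => ret γ π m.1 ρ m.2 with hf
  have hbdd : ∀ u : ℕ, BddBelow (f '' M u) := by
    intro u
    refine ⟨0, ?_⟩
    rintro z ⟨m, hm, rfl⟩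
    exact ret_nonneg π m.1 ρ hγ0 m.2 (hrew u m hm)
  have hstep : ∀ u : ℕ, |sInf (f '' M u) - sInf (f '' M (u + 1))| ≤ (γ * L_P / (1 - γ) ^ 2 + L_r / (1 - γ)) := by
    intro u
    rw [abs_sub_le_iff]
    constructor
    · -- sInf (M u) ≤ sInf (M (u+1)) + (γ * L_P / (1 - γ) ^ 2 + L_r / (1 - γ)) : use hbwd
      have := sInf_image_le_add (f := f) (hM (u+1)) (hbdd u) (L := γ * L_P / (1 - γ) ^ 2 + L_r / (1 - γ)) ?_
      · linarith
      · rintro m₂ hm₂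
        obtain ⟨m₁, hm₁, hKb, hrb⟩ := hbwd u m₂ hm₂
        refine ⟨m₁, hm₁, ?_⟩
        have := ret_diff π m₁.1 m₂.1 ρ hγ0 hγ1 hLP hLr m₁.2 m₂.2
          (hrew u m₁ hm₁) (hrew (u+1) m₂ hm₂) hKb hrb
        have h2 := abs_sub_le_iff.mp this
        simp only [hf]
        linarith [h2.1]
    · -- sInf (M (u+1)) ≤ sInf (M u) + (γ * L_P / (1 - γ) ^ 2 + L_r / (1 - γ)) : use hfwd
      have := sInf_image_le_add (f := f) (hM u) (hbdd (u+1)) (L := γ * L_P / (1 - γ) ^ 2 + L_r / (1 - γ)) ?_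
      · linarith
      · rintro m₁ hm₁
        obtain ⟨m₂, hm₂, hKb, hrb⟩ := hfwd u m₁ hm₁
        refine ⟨m₂, hm₂, ?_⟩
        have := ret_diff π m₁.1 m₂.1 ρ hγ0 hγ1 hLP hLr m₁.2 m₂.2
          (hrew u m₁ hm₁) (hrew (u+1) m₂ hm₂) hKb hrb
        have h2 := abs_sub_le_iff.mp this
        simp only [hf]
        linarith [h2.2]
  intro t₀ t
  induction t with
  | zero => simp
  | succ t ih =>
      have h1 := hstep (t₀ + t)
      have h3 : t₀ + (t + 1) = (t₀ + t) + 1 := by ring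
      rw [h3]
      have := abs_sub_le (sInf (f '' M t₀)) (sInf (f '' M (t₀ + t))) (sInf (f '' M ((t₀ + t) + 1)))
      push_cast
      push_cast at ih
      linarith
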